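/- For every k ≥ 1 there is an isomorphism of abelian groups S_k/I_{λ,k} ≅ R^k/((𝓘_λ ∩ R^k) + R^{k−1}), induced by the substitution y_j ↦ u_j − 1. -/

import Mathlib

open MvPolynomial Finset

/-- The `k`-th elementary symmetric polynomial in the variables indexed by `T ⊆ {1,…,n}`. -/
noncomputable def esymmOn (n : ℕ) (T : Finset (Fin n)) (k : ℕ) : MvPolynomial (Fin n) ℤ :=
  ∑ A ∈ T.powersetCard k, ∏ i ∈ A, X i

/-- The dual-partition value `η_j = #{i : λ_i ≥ j}` (here `lam` is 0-indexed). -/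
def eta (l : ℕ) (lam : ℕ → ℕ) (j : ℕ) : ℕ :=
  ((Finset.range l).filter fun i => j ≤ lam i).card

/-- `p_{λ^∨}(s) = η_{n-s+1} + ⋯ + η_n`. -/
def pdual (n l : ℕ) (lam : ℕ → ℕ) (s : ℕ) : ℕ :=
  ∑ j ∈ Finset.Icc (n - s + 1) n, eta l lam j

/-- The generator `h_d(u_i)` of the K-theoretic Tanisaki ideal, for index set `T` and `q`. -/
noncomputable def hpoly (n : ℕ) (T : Finset (Fin n)) (q d : ℕ) : MvPolynomial (Fin n) ℤ :=
  if q = 0 then esymmOn n T d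
  else ∑ k ∈ Finset.range (d + 1),
    MvPolynomial.C ((-1 : ℤ) ^ (d - k) * ((q + d - k - 1).choose (q - 1) : ℤ)) * esymmOn n T k

/-- The K-theoretic Tanisaki ideal `𝓘_λ`. -/
noncomputable def KTanisaki (n l : ℕ) (lam : ℕ → ℕ) : Ideal (MvPolynomial (Fin n) ℤ) :=
  Ideal.span {p | ∃ s : ℕ, 1 ≤ s ∧ s ≤ n ∧ ∃ T : Finset (Fin n), T.card = s ∧
    ∃ d : ℕ, s + 1 - pdual n l lam s ≤ d ∧ p = hpoly n T (pdual n l lam s) d}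

/-- The (cohomological) Tanisaki ideal `I_λ`. -/
noncomputable def Tanisaki (n l : ℕ) (lam : ℕ → ℕ) : Ideal (MvPolynomial (Fin n) ℤ) :=
  Ideal.span {p | ∃ s : ℕ, 1 ≤ s ∧ s ≤ n ∧ ∃ T : Finset (Fin n), T.card = s ∧
    ∃ d : ℕ, s + 1 - pdual n l lam s ≤ d ∧ p = esymmOn n T d}

/-- `R^k`: the additive group of polynomials of total degree ≤ k vanishing at (1,…,1). -/
noncomputable def RkGrp (n k : ℕ) : AddSubgroup (MvPolynomial (Fin n) ℤ) where
  carrier := {p | p.totalDegree ≤ k ∧ MvPolynomial.eval (fun _ => (1 : ℤ)) p = 0}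
  add_mem' := by
    intro a b ha hb
    exact ⟨le_trans (MvPolynomial.totalDegree_add a b) (max_le ha.1 hb.1), by simp [ha.2, hb.2]⟩
  zero_mem' := by simp
  neg_mem' := by
    intro a ha
    exact ⟨by rw [MvPolynomial.totalDegree_neg]; exact ha.1, by simp [ha.2]⟩

/-- `S_k`: the additive group of homogeneous polynomials of degree k. -/
noncomputable def SkGrp (n k : ℕ) : AddSubgroup (MvPolynomial (Fin n) ℤ) :=
  (MvPolynomial.homogeneousSubmodule (Fin n) ℤ k).toAddSubgroup

/-- The substitution `y_j ↦ u_j − 1`. -/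
noncomputable def substShift (n : ℕ) : MvPolynomial (Fin n) ℤ →+* MvPolynomial (Fin n) ℤ :=
  (MvPolynomial.bind₁ fun j : Fin n => (MvPolynomial.X j - 1 : MvPolynomial (Fin n) ℤ)).toRingHom

/-- For every k ≥ 1 there is an isomorphism of abelian groups
S_k/I_{λ,k} ≅ R^k/((𝓘_λ ∩ R^k) + R^{k−1}), induced by the substitution y_j ↦ u_j − 1. -/
----------------------------------------------------------------------
-- auxiliary development
----------------------------------------------------------------------

noncomputable def unshift (n : ℕ) : MvPolynomial (Fin n) ℤ →+* MvPolynomial (Fin n) ℤ :=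
  (MvPolynomial.bind₁ fun j : Fin n => (MvPolynomial.X j + 1 : MvPolynomial (Fin n) ℤ)).toRingHom

lemma substShift_apply (n : ℕ) (p : MvPolynomial (Fin n) ℤ) :
    substShift n p = bind₁ (fun j : Fin n => (X j - 1 : MvPolynomial (Fin n) ℤ)) p := rfl

lemma unshift_apply (n : ℕ) (p : MvPolynomial (Fin n) ℤ) :
    unshift n p = bind₁ (fun j : Fin n => (X j + 1 : MvPolynomial (Fin n) ℤ)) p := rfl

lemma substShift_X (n : ℕ) (i : Fin n) : substShift n (X i) = X i - 1 := by
  rw [substShift_apply, bind₁_X_right]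

lemma unshift_substShift (n : ℕ) (p : MvPolynomial (Fin n) ℤ) :
    unshift n (substShift n p) = p := by
  rw [substShift_apply, unshift_apply, bind₁_bind₁]
  simp [bind₁_X_left]

lemma substShift_unshift (n : ℕ) (p : MvPolynomial (Fin n) ℤ) :
    substShift n (unshift n p) = p := by
  rw [substShift_apply, unshift_apply, bind₁_bind₁]
  simp [bind₁_X_left]

lemma totalDegree_bind₁_le {n : ℕ} (g : Fin n → MvPolynomial (Fin n) ℤ)
    (hg : ∀ j, (g j).totalDegree ≤ 1) (p : MvPolynomial (Fin n) ℤ) :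
    (bind₁ g p).totalDegree ≤ p.totalDegree := by
  conv_lhs => rw [p.as_sum, map_sum]
  refine le_trans (totalDegree_finset_sum _ _) (Finset.sup_le fun v hv => ?_)
  rw [monomial_eq, map_mul, bind₁_C_right]
  refine le_trans (totalDegree_mul _ _) ?_
  rw [totalDegree_C, zero_add, Finsupp.prod, map_prod]
  refine le_trans (totalDegree_finset_prod _ _) ?_
  refine le_trans ?_ (le_totalDegree hv)
  rw [Finsupp.sum]
  refine Finset.sum_le_sum fun i hi => ?_
  simp only [map_pow]
  refine le_trans (totalDegree_pow _ _) ?_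
  calc v i * (bind₁ g (X i)).totalDegree ≤ v i * 1 := by
        refine Nat.mul_le_mul_left _ ?_
        rw [bind₁_X_right]; exact hg i
    _ = v i := Nat.mul_one _

lemma totalDegree_substShift_le {n : ℕ} (p : MvPolynomial (Fin n) ℤ) :
    (substShift n p).totalDegree ≤ p.totalDegree := by
  refine totalDegree_bind₁_le _ (fun j => ?_) p
  refine le_trans (totalDegree_sub _ _) ?_
  simp [totalDegree_X]

lemma totalDegree_unshift_le {n : ℕ} (p : MvPolynomial (Fin n) ℤ) :
    (unshift n p).totalDegree ≤ p.totalDegree := by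
  refine totalDegree_bind₁_le _ (fun j => ?_) p
  refine le_trans (totalDegree_add _ _) ?_
  simp [totalDegree_X]

lemma eval_one_substShift {n : ℕ} (p : MvPolynomial (Fin n) ℤ) :
    eval (fun _ => (1 : ℤ)) (substShift n p) = constantCoeff p := by
  have halg : ∀ (f : Fin n → ℤ) (r : MvPolynomial (Fin n) ℤ), aeval f r = eval f r := by
    intro f r
    have hmap : algebraMap ℤ ℤ = RingHom.id ℤ := by ext x; simp
    rw [aeval_def, hmap]
    rfl
  have h := aeval_bind₁ (R := ℤ) (S := ℤ) (fun _ : Fin n => (1 : ℤ))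
    (fun j : Fin n => (X j - 1 : MvPolynomial (Fin n) ℤ)) p
  rw [substShift_apply, ← halg, h, halg]
  have heq : (fun i : Fin n => aeval (fun _ : Fin n => (1 : ℤ))
      ((X i - 1 : MvPolynomial (Fin n) ℤ))) = fun _ => (0 : ℤ) := by
    funext i; simp
  rw [heq, ← eval_zero']

lemma esymmOn_isHomogeneous {n : ℕ} (T : Finset (Fin n)) (k : ℕ) :
    (esymmOn n T k).IsHomogeneous k := by
  refine IsHomogeneous.sum _ _ _ fun A hA => ?_
  have hc : A.card = k := (Finset.mem_powersetCard.mp hA).2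
  have := IsHomogeneous.prod A (fun i => (X i : MvPolynomial (Fin n) ℤ)) (fun _ => 1)
    (fun i _ => isHomogeneous_X _ _)
  simpa [hc] using this

lemma esymmOn_eq_zero {n : ℕ} {T : Finset (Fin n)} {k : ℕ} (h : T.card < k) :
    esymmOn n T k = 0 := by
  rw [esymmOn, Finset.powersetCard_eq_empty.mpr h, Finset.sum_empty]

lemma count_powersetCard {n : ℕ} {T B : Finset (Fin n)} (hB : B ⊆ T) {m : ℕ} (hBm : B.card ≤ m) :
    ((T.powersetCard m).filter (fun A => B ⊆ A)).card
      = (T.card - B.card).choose (m - B.card) := by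
  have hcard : ((T.powersetCard m).filter (fun A => B ⊆ A)).card
      = ((T \ B).powersetCard (m - B.card)).card := by
    refine Finset.card_bij' (fun A _ => A \ B) (fun D _ => D ∪ B) ?_ ?_ ?_ ?_
    · intro A hA
      simp only [Finset.mem_filter, Finset.mem_powersetCard] at hA
      obtain ⟨⟨hAT, hAc⟩, hBA⟩ := hA
      refine Finset.mem_powersetCard.mpr ⟨Finset.sdiff_subset_sdiff hAT le_rfl, ?_⟩
      rw [Finset.card_sdiff_of_subset hBA, hAc]
    · intro D hD
      rw [Finset.mem_powersetCard] at hD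
      obtain ⟨hDT, hDc⟩ := hD
      have hdisj : Disjoint D B := Finset.disjoint_of_subset_left hDT Finset.sdiff_disjoint
      refine Finset.mem_filter.mpr ⟨Finset.mem_powersetCard.mpr ⟨?_, ?_⟩, Finset.subset_union_right⟩
      · exact Finset.union_subset (hDT.trans Finset.sdiff_subset) hB
      · rw [Finset.card_union_of_disjoint hdisj, hDc]
        omega
    · intro A hA
      simp only [Finset.mem_filter, Finset.mem_powersetCard] at hA
      exact Finset.sdiff_union_of_subset hA.2
    · intro D hD
      rw [Finset.mem_powersetCard] at hD
      have hdisj : Disjoint D B := Finset.disjoint_of_subset_left hD.1 Finset.sdiff_disjoint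
      show (D ∪ B) \ B = D
      rw [Finset.union_sdiff_right, Finset.sdiff_eq_self_of_disjoint hdisj]
  rw [hcard, Finset.card_powersetCard, Finset.card_sdiff_of_subset hB]

lemma sum_ite_range {M : Type*} [AddCommMonoid M] (g : ℕ → M) (s' m : ℕ)
    (hg : ∀ i, s' < i → g i = 0) :
    (∑ i ∈ Finset.range (s' + 1), if i ≤ m then g i else 0)
      = ∑ i ∈ Finset.range (m + 1), g i := by
  have h1 : (∑ i ∈ Finset.range (s' + 1), if i ≤ m then g i else 0)
      = ∑ i ∈ Finset.range (s' + m + 1), if i ≤ m then g i else 0 := by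
    refine Finset.sum_subset (Finset.range_subset_range.mpr (by omega)) ?_
    intro i hi hni
    rw [Finset.mem_range] at hi
    rw [Finset.mem_range, not_lt] at hni
    by_cases him : i ≤ m
    · rw [if_pos him]; exact hg i (by omega)
    · rw [if_neg him]
  have h2 : (∑ i ∈ Finset.range (m + 1), g i)
      = ∑ i ∈ Finset.range (s' + m + 1), if i ≤ m then g i else 0 := by
    have hcg : ∀ i ∈ Finset.range (m + 1), g i = if i ≤ m then g i else 0 := by
      intro i hi
      rw [Finset.mem_range] at hi
      rw [if_pos (by omega)]
    rw [Finset.sum_congr rfl hcg]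
    refine Finset.sum_subset (Finset.range_subset_range.mpr (by omega)) ?_
    intro i hi hni
    rw [Finset.mem_range, not_lt] at hni
    rw [if_neg (by omega)]
  rw [h1, ← h2]

lemma R2 {n : ℕ} (T : Finset (Fin n)) (m : ℕ) :
    substShift n (esymmOn n T m)
      = ∑ i ∈ Finset.range (m + 1),
          MvPolynomial.C ((-1 : ℤ) ^ (m - i) * ((T.card - i).choose (m - i) : ℤ))
            * esymmOn n T i := by
  classical
  have step1 : substShift n (esymmOn n T m)
      = ∑ A ∈ T.powersetCard m, ∑ B ∈ A.powerset,
          ((-1 : MvPolynomial (Fin n) ℤ) ^ (m - B.card) * ∏ i ∈ B, X i) := by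
    rw [esymmOn, map_sum]
    refine Finset.sum_congr rfl fun A hA => ?_
    have hAc : A.card = m := (Finset.mem_powersetCard.mp hA).2
    rw [map_prod]
    have hX : ∀ i ∈ A, substShift n (X i) = (X i + (-1) : MvPolynomial (Fin n) ℤ) := by
      intro i _; rw [substShift_X]; ring
    rw [Finset.prod_congr rfl hX, Finset.prod_add]
    refine Finset.sum_congr rfl fun B hB => ?_
    rw [Finset.mem_powerset] at hB
    rw [Finset.prod_const, Finset.card_sdiff_of_subset hB, hAc, mul_comm]
  have step2 : substShift n (esymmOn n T m)
      = ∑ B ∈ T.powerset, ∑ A ∈ (T.powersetCard m).filter (fun A => B ⊆ A),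
          ((-1 : MvPolynomial (Fin n) ℤ) ^ (m - B.card) * ∏ i ∈ B, X i) := by
    rw [step1]
    refine Finset.sum_comm' ?_
    intro A B
    simp only [Finset.mem_powersetCard, Finset.mem_powerset, Finset.mem_filter]
    constructor
    · rintro ⟨⟨hAT, hAc⟩, hBA⟩
      exact ⟨⟨⟨hAT, hAc⟩, hBA⟩, hBA.trans hAT⟩
    · rintro ⟨⟨⟨hAT, hAc⟩, hBA⟩, _⟩
      exact ⟨⟨hAT, hAc⟩, hBA⟩
  have step3 : substShift n (esymmOn n T m)
      = ∑ i ∈ Finset.range (T.card + 1),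
          if i ≤ m then
            MvPolynomial.C ((-1 : ℤ) ^ (m - i) * ((T.card - i).choose (m - i) : ℤ))
              * esymmOn n T i
          else 0 := by
    rw [step2, Finset.sum_powerset]
    refine Finset.sum_congr rfl fun i hi => ?_
    by_cases him : i ≤ m
    · rw [if_pos him, esymmOn, Finset.mul_sum, Finset.sum_congr rfl]
      intro B hB
      rw [Finset.mem_powersetCard] at hB
      obtain ⟨hBT, hBc⟩ := hB
      rw [Finset.sum_const, count_powersetCard hBT (hBc ▸ him), hBc]
      rw [nsmul_eq_mul]
      push_cast
      rw [map_mul]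
      simp only [map_pow, map_neg, map_one, MvPolynomial.C_eq_coe_nat]
      ring
    · rw [if_neg him]
      refine Finset.sum_eq_zero fun B hB => ?_
      rw [Finset.mem_powersetCard] at hB
      have : (T.powersetCard m).filter (fun A => B ⊆ A) = ∅ := by
        refine Finset.filter_eq_empty_iff.mpr fun A hA => ?_
        rw [Finset.mem_powersetCard] at hA
        intro hBA
        have := Finset.card_le_card hBA
        omega
      rw [this, Finset.sum_empty]
  rw [step3]
  refine sum_ite_range _ _ _ fun i hi => ?_
  rw [esymmOn_eq_zero hi, mul_zero]

lemma sum_guard_shift {M : Type*} [AddCommMonoid M] (f : ℕ → M) (i d : ℕ) (hid : i ≤ d) :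
    (∑ m ∈ Finset.range (d + 1), if i ≤ m then f m else 0)
      = ∑ j ∈ Finset.range (d - i + 1), f (i + j) := by
  rw [← Finset.sum_filter]
  have hfil : (Finset.range (d + 1)).filter (fun m => i ≤ m) = Finset.Ico i (d + 1) := by
    ext x
    simp only [Finset.mem_filter, Finset.mem_range, Finset.mem_Ico]
    omega
  rw [hfil, Finset.sum_Ico_eq_sum_range]
  have : d + 1 - i = d - i + 1 := by omega
  rw [this]

lemma vand_aux (q s i d : ℕ) (hq : 1 ≤ q) (hsd : s + 1 ≤ d + q) (hid : i ≤ d) (his : i ≤ s) :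
    (∑ m ∈ Finset.range (d + 1),
        if i ≤ m then (d + q - (s + 1)).choose (d - m) * (s - i).choose (m - i) else 0)
      = (q + d - i - 1).choose (q - 1) := by
  rw [sum_guard_shift _ i d hid]
  have hterm : ∀ j, (d + q - (s + 1)).choose (d - (i + j)) * (s - i).choose ((i + j) - i)
      = (s - i).choose j * (d + q - (s + 1)).choose ((d - i) - j) := by
    intro j
    have h' : d - (i + j) = d - i - j := by omega
    rw [Nat.add_sub_cancel_left, h', mul_comm]
  rw [Finset.sum_congr rfl fun j _ => hterm j]
  have hv := Nat.add_choose_eq (s - i) (d + q - (s + 1)) (d - i)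
  rw [Finset.Nat.sum_antidiagonal_eq_sum_range_succ
    (fun a b => (s - i).choose a * (d + q - (s + 1)).choose b) (d - i)] at hv
  rw [← hv]
  have h1 : s - i + (d + q - (s + 1)) = q + d - i - 1 := by omega
  rw [h1]
  have h2 : d - i ≤ q + d - i - 1 := by omega
  rw [← Nat.choose_symm h2]
  congr 1
  omega

lemma A_identity {n : ℕ} (T : Finset (Fin n)) (q d : ℕ) (hq : 1 ≤ q)
    (hd : T.card + 1 ≤ d + q) :
    hpoly n T q d = ∑ m ∈ Finset.range (d + 1),
      MvPolynomial.C ((-1 : ℤ) ^ (d - m) * ((d + q - (T.card + 1)).choose (d - m) : ℤ))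
        * substShift n (esymmOn n T m) := by
  classical
  set s := T.card with hs
  have hrhs : ∑ m ∈ Finset.range (d + 1),
      MvPolynomial.C ((-1 : ℤ) ^ (d - m) * ((d + q - (s + 1)).choose (d - m) : ℤ))
        * substShift n (esymmOn n T m)
      = ∑ i ∈ Finset.range (d + 1), ∑ m ∈ Finset.range (d + 1),
          (if i ≤ m then
            MvPolynomial.C ((-1 : ℤ) ^ (d - m) * ((d + q - (s + 1)).choose (d - m) : ℤ)
                * ((-1 : ℤ) ^ (m - i) * ((s - i).choose (m - i) : ℤ)))
          else 0) * esymmOn n T i := by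
    rw [show (∑ m ∈ Finset.range (d + 1),
        MvPolynomial.C ((-1 : ℤ) ^ (d - m) * ((d + q - (s + 1)).choose (d - m) : ℤ))
          * substShift n (esymmOn n T m))
      = ∑ m ∈ Finset.range (d + 1), ∑ i ∈ Finset.range (d + 1),
          (if i ≤ m then
            MvPolynomial.C ((-1 : ℤ) ^ (d - m) * ((d + q - (s + 1)).choose (d - m) : ℤ)
                * ((-1 : ℤ) ^ (m - i) * ((s - i).choose (m - i) : ℤ)))
          else 0) * esymmOn n T i from Finset.sum_congr rfl fun m hm => ?_]
    · rw [Finset.sum_comm]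
    · rw [Finset.mem_range] at hm
      rw [R2, Finset.mul_sum]
      have hpad : ∀ u : ℕ → MvPolynomial (Fin n) ℤ,
          (∑ i ∈ Finset.range (m + 1), u i)
            = ∑ i ∈ Finset.range (d + 1), if i ≤ m then u i else 0 := by
        intro u
        rw [← Finset.sum_filter]
        have hfil : (Finset.range (d + 1)).filter (fun i => i ≤ m) = Finset.range (m + 1) := by
          ext x
          simp only [Finset.mem_filter, Finset.mem_range]
          omega
        rw [hfil]
      rw [hpad (fun i => MvPolynomial.C ((-1 : ℤ) ^ (d - m) * ((d + q - (s + 1)).choose (d - m) : ℤ))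
          * (MvPolynomial.C ((-1 : ℤ) ^ (m - i) * ((s - i).choose (m - i) : ℤ)) * esymmOn n T i))]
      refine Finset.sum_congr rfl fun i _ => ?_
      by_cases him : i ≤ m
      · rw [if_pos him, if_pos him]
        simp only [map_mul]
        ring
      · rw [if_neg him, if_neg him, zero_mul]
  rw [hrhs]
  rw [hpoly, if_neg (by omega)]
  refine Finset.sum_congr rfl fun i hi => ?_
  rw [Finset.mem_range] at hi
  by_cases his : i ≤ s
  · -- coefficient identity
    have hcoef : ((-1 : ℤ) ^ (d - i) * ((q + d - i - 1).choose (q - 1) : ℤ))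
        = ∑ m ∈ Finset.range (d + 1),
            (if i ≤ m then
              ((-1 : ℤ) ^ (d - m) * ((d + q - (s + 1)).choose (d - m) : ℤ)
                * ((-1 : ℤ) ^ (m - i) * ((s - i).choose (m - i) : ℤ)))
            else 0) := by
      have hterm : ∀ m ∈ Finset.range (d + 1),
          (if i ≤ m then
              ((-1 : ℤ) ^ (d - m) * ((d + q - (s + 1)).choose (d - m) : ℤ)
                * ((-1 : ℤ) ^ (m - i) * ((s - i).choose (m - i) : ℤ)))
            else 0)
          = (-1 : ℤ) ^ (d - i) * (if i ≤ m then
              (((d + q - (s + 1)).choose (d - m) * (s - i).choose (m - i) : ℕ) : ℤ) else 0) := by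
        intro m hm
        rw [Finset.mem_range] at hm
        by_cases him : i ≤ m
        · rw [if_pos him, if_pos him]
          have hpow : (-1 : ℤ) ^ (d - m) * (-1 : ℤ) ^ (m - i) = (-1 : ℤ) ^ (d - i) := by
            rw [← pow_add]
            congr 1
            omega
          push_cast
          calc (-1 : ℤ) ^ (d - m) * ((d + q - (s + 1)).choose (d - m) : ℤ)
                * ((-1 : ℤ) ^ (m - i) * ((s - i).choose (m - i) : ℤ))
              = ((-1 : ℤ) ^ (d - m) * (-1 : ℤ) ^ (m - i)) *
                  (((d + q - (s + 1)).choose (d - m) : ℤ) * ((s - i).choose (m - i) : ℤ)) := by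
                ring
            _ = _ := by rw [hpow]
        · rw [if_neg him, if_neg him, mul_zero]
      rw [Finset.sum_congr rfl hterm, ← Finset.mul_sum]
      have hnat := vand_aux q s i d hq hd (by omega) his
      have hcast : (∑ m ∈ Finset.range (d + 1),
          (if i ≤ m then
            (((d + q - (s + 1)).choose (d - m) * (s - i).choose (m - i) : ℕ) : ℤ) else 0))
          = (((q + d - i - 1).choose (q - 1) : ℕ) : ℤ) := by
        rw [← hnat]
        push_cast
        rfl
      rw [hcast]
    calc MvPolynomial.C ((-1 : ℤ) ^ (d - i) * ((q + d - i - 1).choose (q - 1) : ℤ)) * esymmOn n T i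
        = MvPolynomial.C (∑ m ∈ Finset.range (d + 1),
            (if i ≤ m then
              ((-1 : ℤ) ^ (d - m) * ((d + q - (s + 1)).choose (d - m) : ℤ)
                * ((-1 : ℤ) ^ (m - i) * ((s - i).choose (m - i) : ℤ)))
            else 0)) * esymmOn n T i := by rw [← hcoef]
      _ = (∑ m ∈ Finset.range (d + 1),
            (if i ≤ m then
              MvPolynomial.C ((-1 : ℤ) ^ (d - m) * ((d + q - (s + 1)).choose (d - m) : ℤ)
                * ((-1 : ℤ) ^ (m - i) * ((s - i).choose (m - i) : ℤ)))
            else 0)) * esymmOn n T i := by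
          rw [map_sum]
          congr 1
          refine Finset.sum_congr rfl fun m _ => ?_
          by_cases h : i ≤ m
          · rw [if_pos h, if_pos h]
          · rw [if_neg h, if_neg h, map_zero]
      _ = ∑ m ∈ Finset.range (d + 1),
            (if i ≤ m then
              MvPolynomial.C ((-1 : ℤ) ^ (d - m) * ((d + q - (s + 1)).choose (d - m) : ℤ)
                * ((-1 : ℤ) ^ (m - i) * ((s - i).choose (m - i) : ℤ)))
            else 0) * esymmOn n T i := by rw [Finset.sum_mul]
  · have hzero : esymmOn n T i = 0 := esymmOn_eq_zero (by omega)
    rw [hzero, mul_zero]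
    rw [Finset.sum_eq_zero]
    intro m hm
    by_cases him : i ≤ m
    · rw [if_pos him]; exact mul_zero _
    · rw [if_neg him]; exact zero_mul _

lemma totalDegree_pow_sub_one {n : ℕ} (a : Fin n) (e : ℕ) :
    ((X a - 1 : MvPolynomial (Fin n) ℤ) ^ e - (X a : MvPolynomial (Fin n) ℤ) ^ e).totalDegree
      ≤ e - 1 := by
  rw [sub_pow (X a : MvPolynomial (Fin n) ℤ) 1 e, Finset.sum_range_succ]
  have hlast : ((-1 : MvPolynomial (Fin n) ℤ) ^ (e + e) * (X a) ^ e * 1 ^ (e - e) * (e.choose e : MvPolynomial (Fin n) ℤ))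
      = (X a : MvPolynomial (Fin n) ℤ) ^ e := by
    rw [← two_mul, pow_mul]
    simp
  rw [hlast, add_sub_cancel_right]
  refine le_trans (totalDegree_finset_sum _ _) (Finset.sup_le fun m hm => ?_)
  rw [Finset.mem_range] at hm
  refine le_trans (totalDegree_mul _ _) ?_
  have h1 : ((-1 : MvPolynomial (Fin n) ℤ) ^ (m + e) * (X a) ^ m * 1 ^ (e - m)).totalDegree ≤ m := by
    refine le_trans (totalDegree_mul _ _) ?_
    rw [one_pow, totalDegree_one]
    rw [Nat.add_zero]
    refine le_trans (totalDegree_mul _ _) ?_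
    have hneg : ((-1 : MvPolynomial (Fin n) ℤ) ^ (m + e)).totalDegree = 0 := by
      rcases Nat.even_or_odd (m + e) with he | ho
      · rw [he.neg_one_pow, totalDegree_one]
      · rw [ho.neg_one_pow, totalDegree_neg, totalDegree_one]
    rw [hneg, Nat.zero_add]
    refine le_trans (totalDegree_pow _ _) ?_
    rw [totalDegree_X]
    omega
  have h2 : ((e.choose m : MvPolynomial (Fin n) ℤ)).totalDegree = 0 := by
    rw [← MvPolynomial.C_eq_coe_nat, totalDegree_C]
  omega

lemma totalDegree_prod_sub {n : ℕ} (s : Finset (Fin n)) (e : Fin n → ℕ) :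
    ((∏ i ∈ s, (X i - 1 : MvPolynomial (Fin n) ℤ) ^ e i)
      - ∏ i ∈ s, (X i : MvPolynomial (Fin n) ℤ) ^ e i).totalDegree
      ≤ (∑ i ∈ s, e i) - 1 := by
  classical
  induction s using Finset.induction_on with
  | empty => simp
  | insert a s ha ih =>
    rw [Finset.prod_insert ha, Finset.prod_insert ha, Finset.sum_insert ha]
    have hsplit : (X a - 1 : MvPolynomial (Fin n) ℤ) ^ e a * ∏ i ∈ s, (X i - 1 : MvPolynomial (Fin n) ℤ) ^ e i
        - (X a : MvPolynomial (Fin n) ℤ) ^ e a * ∏ i ∈ s, (X i : MvPolynomial (Fin n) ℤ) ^ e i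
        = (X a - 1 : MvPolynomial (Fin n) ℤ) ^ e a *
            ((∏ i ∈ s, (X i - 1 : MvPolynomial (Fin n) ℤ) ^ e i) - ∏ i ∈ s, (X i : MvPolynomial (Fin n) ℤ) ^ e i)
          + ((X a - 1 : MvPolynomial (Fin n) ℤ) ^ e a - (X a : MvPolynomial (Fin n) ℤ) ^ e a) *
              ∏ i ∈ s, (X i : MvPolynomial (Fin n) ℤ) ^ e i := by
      ring
    rw [hsplit]
    have hXa1 : ((X a - 1 : MvPolynomial (Fin n) ℤ) ^ e a).totalDegree ≤ e a := by
      refine le_trans (totalDegree_pow _ _) ?_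
      have h1 : ((X a - 1 : MvPolynomial (Fin n) ℤ)).totalDegree ≤ 1 := by
        refine le_trans (totalDegree_sub _ _) ?_
        simp [totalDegree_X]
      calc e a * ((X a - 1 : MvPolynomial (Fin n) ℤ)).totalDegree ≤ e a * 1 :=
            Nat.mul_le_mul_left _ h1
        _ = e a := Nat.mul_one _
    have hprodX : (∏ i ∈ s, (X i : MvPolynomial (Fin n) ℤ) ^ e i).totalDegree ≤ ∑ i ∈ s, e i := by
      refine le_trans (totalDegree_finset_prod _ _) ?_
      refine Finset.sum_le_sum fun i _ => ?_
      refine le_trans (totalDegree_pow _ _) ?_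
      rw [totalDegree_X]
      omega
    refine le_trans (totalDegree_add _ _) (max_le ?_ ?_)
    · by_cases hz : ∑ i ∈ s, e i = 0
      · have hall : ∀ i ∈ s, e i = 0 := by
          intro i hi
          have := Finset.sum_eq_zero_iff.mp hz i hi
          omega
        have heq : (∏ i ∈ s, (X i - 1 : MvPolynomial (Fin n) ℤ) ^ e i)
            = ∏ i ∈ s, (X i : MvPolynomial (Fin n) ℤ) ^ e i := by
          rw [Finset.prod_congr rfl fun i hi => by rw [hall i hi, pow_zero],
            Finset.prod_congr rfl fun i hi => (by rw [hall i hi, pow_zero] :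
              (X i : MvPolynomial (Fin n) ℤ) ^ e i = 1)]
        rw [heq, sub_self, mul_zero, totalDegree_zero]
        omega
      · calc ((X a - 1 : MvPolynomial (Fin n) ℤ) ^ e a *
              ((∏ i ∈ s, (X i - 1 : MvPolynomial (Fin n) ℤ) ^ e i)
                - ∏ i ∈ s, (X i : MvPolynomial (Fin n) ℤ) ^ e i)).totalDegree
            ≤ ((X a - 1 : MvPolynomial (Fin n) ℤ) ^ e a).totalDegree
              + ((∏ i ∈ s, (X i - 1 : MvPolynomial (Fin n) ℤ) ^ e i)
                - ∏ i ∈ s, (X i : MvPolynomial (Fin n) ℤ) ^ e i).totalDegree :=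
              totalDegree_mul _ _
          _ ≤ e a + ((∑ i ∈ s, e i) - 1) := Nat.add_le_add hXa1 ih
          _ ≤ e a + ∑ i ∈ s, e i - 1 := by omega
    · by_cases hz : e a = 0
      · rw [hz, pow_zero, pow_zero, sub_self, zero_mul, totalDegree_zero]
        omega
      · calc (((X a - 1 : MvPolynomial (Fin n) ℤ) ^ e a - (X a : MvPolynomial (Fin n) ℤ) ^ e a) *
              ∏ i ∈ s, (X i : MvPolynomial (Fin n) ℤ) ^ e i).totalDegree
            ≤ ((X a - 1 : MvPolynomial (Fin n) ℤ) ^ e a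
                - (X a : MvPolynomial (Fin n) ℤ) ^ e a).totalDegree
              + (∏ i ∈ s, (X i : MvPolynomial (Fin n) ℤ) ^ e i).totalDegree :=
              totalDegree_mul _ _
          _ ≤ (e a - 1) + ∑ i ∈ s, e i := Nat.add_le_add (totalDegree_pow_sub_one a (e a)) hprodX
          _ ≤ e a + ∑ i ∈ s, e i - 1 := by omega

lemma totalDegree_substShift_sub_self {n : ℕ} (p : MvPolynomial (Fin n) ℤ) :
    (substShift n p - p).totalDegree ≤ p.totalDegree - 1 := by
  have hmono : ∀ v : Fin n →₀ ℕ, ∀ c : ℤ,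
      (substShift n (monomial v c) - monomial v c).totalDegree
        ≤ (∑ i ∈ v.support, v i) - 1 := by
    intro v c
    have hsub : substShift n (C c) = C c := bind₁_C_right _ _
    rw [monomial_eq, map_mul, hsub, Finsupp.prod, map_prod, ← mul_sub]
    refine le_trans (totalDegree_mul _ _) ?_
    rw [totalDegree_C, Nat.zero_add]
    have hXsub : ∀ i ∈ v.support, substShift n ((X i : MvPolynomial (Fin n) ℤ) ^ v i)
        = (X i - 1 : MvPolynomial (Fin n) ℤ) ^ v i := by
      intro i _
      rw [map_pow, substShift_X]
    rw [Finset.prod_congr rfl hXsub]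
    exact totalDegree_prod_sub v.support (fun i => v i)
  conv_lhs => rw [p.as_sum, map_sum, ← Finset.sum_sub_distrib]
  refine le_trans (totalDegree_finset_sum _ _) (Finset.sup_le fun v hv => ?_)
  refine le_trans (hmono v (coeff v p)) ?_
  have hle := le_totalDegree hv
  have hsum : (v.sum fun _ e => e) = ∑ i ∈ v.support, v i := rfl
  omega

lemma sum_homogeneousComponent_le {n : ℕ} (f : MvPolynomial (Fin n) ℤ) (k : ℕ)
    (hf : f.totalDegree ≤ k) :
    (∑ i ∈ Finset.range (k + 1), homogeneousComponent i f) = f := by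
  have h2 : (∑ i ∈ Finset.range (f.totalDegree + 1), homogeneousComponent i f)
      = ∑ i ∈ Finset.range (k + 1), homogeneousComponent i f := by
    refine Finset.sum_subset (Finset.range_subset_range.mpr (Nat.add_le_add_right hf 1)) ?_
    intro i hi hni
    rw [Finset.mem_range, not_lt] at hni
    exact homogeneousComponent_eq_zero i f (show f.totalDegree < i by omega)
  rw [← h2, f.sum_homogeneousComponent]

lemma totalDegree_sub_homogeneousComponent {n : ℕ} (f : MvPolynomial (Fin n) ℤ) (k : ℕ)
    (hf : f.totalDegree ≤ k) :
    (f - homogeneousComponent k f).totalDegree ≤ k - 1 := by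
  have h := sum_homogeneousComponent_le f k hf
  rw [Finset.sum_range_succ] at h
  have heq : f - homogeneousComponent k f = ∑ i ∈ Finset.range k, homogeneousComponent i f :=
    sub_eq_of_eq_add h.symm
  rw [heq]
  refine le_trans (totalDegree_finset_sum _ _) (Finset.sup_le fun i hi => ?_)
  rw [Finset.mem_range] at hi
  have := (homogeneousComponent_isHomogeneous i f).totalDegree_le
  omega

lemma homogeneousComponent_mem_span {n : ℕ} {G : Set (MvPolynomial (Fin n) ℤ)}
    (hG : ∀ g ∈ G, ∃ d : ℕ, g.IsHomogeneous d) {f : MvPolynomial (Fin n) ℤ}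
    (hf : f ∈ Ideal.span G) (k : ℕ) : homogeneousComponent k f ∈ Ideal.span G := by
  revert k
  refine Submodule.span_induction ?_ ?_ ?_ ?_ hf
  · intro g hg k
    obtain ⟨d, hd⟩ := hG g hg
    rw [homogeneousComponent_of_mem ((mem_homogeneousSubmodule d g).mpr hd)]
    by_cases hkd : k = d
    · rw [if_pos hkd]; exact Ideal.subset_span hg
    · rw [if_neg hkd]; exact zero_mem _
  · intro k
    rw [map_zero]; exact zero_mem _
  · intro x y _ _ hx hy k
    rw [map_add]; exact add_mem (hx k) (hy k)
  · intro a x _ hx k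
    rw [smul_eq_mul]
    have hdecomp : a * x = ∑ j ∈ Finset.range (a.totalDegree + 1),
        ∑ i ∈ Finset.range (x.totalDegree + 1),
          homogeneousComponent j a * homogeneousComponent i x := by
      conv_lhs => rw [← a.sum_homogeneousComponent, ← x.sum_homogeneousComponent]
      rw [Finset.sum_mul_sum]
    rw [hdecomp, map_sum]
    refine Ideal.sum_mem _ fun j _ => ?_
    rw [map_sum]
    refine Ideal.sum_mem _ fun i _ => ?_
    have hmul : (homogeneousComponent j a * homogeneousComponent i x).IsHomogeneous (j + i) :=
      (homogeneousComponent_isHomogeneous j a).mul (homogeneousComponent_isHomogeneous i x)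
    rw [homogeneousComponent_of_mem ((mem_homogeneousSubmodule _ _).mpr hmul)]
    by_cases hk : k = j + i
    · rw [if_pos hk]
      exact Ideal.mul_mem_left _ _ (hx i)
    · rw [if_neg hk]; exact zero_mem _

lemma constantCoeff_of_homogeneous {n k : ℕ} (hk : 1 ≤ k) {p : MvPolynomial (Fin n) ℤ}
    (hp : p.IsHomogeneous k) : constantCoeff p = 0 := by
  rw [constantCoeff_eq]
  exact hp.coeff_eq_zero (by rw [map_zero]; omega)

lemma KT_le_map {n l : ℕ} (lam : ℕ → ℕ) :
    KTanisaki n l lam ≤ Ideal.map (substShift n) (Tanisaki n l lam) := by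
  rw [KTanisaki, Ideal.span_le]
  rintro p ⟨s, hs1, hsn, T, hT, d, hd, rfl⟩
  set q := pdual n l lam s with hq
  by_cases hq0 : q = 0
  · simp only [hpoly, if_pos hq0]
    rw [esymmOn_eq_zero (show T.card < d by omega)]
    exact zero_mem _
  · have hq1 : 1 ≤ q := by omega
    have hdq : T.card + 1 ≤ d + q := by omega
    rw [SetLike.mem_coe, A_identity T q d hq1 hdq]
    refine Ideal.sum_mem _ fun m hm => ?_
    rw [Finset.mem_range] at hm
    by_cases hm0 : s + 1 - q ≤ m
    · refine Ideal.mul_mem_left _ _ ?_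
      refine Ideal.mem_map_of_mem _ ?_
      exact Ideal.subset_span ⟨s, hs1, hsn, T, hT, m, hm0, rfl⟩
    · have hc0 : (d + q - (T.card + 1)).choose (d - m) = 0 :=
        Nat.choose_eq_zero_of_lt (by omega)
      rw [hc0]
      simp

lemma substShift_esymm_mem {n l : ℕ} (lam : ℕ → ℕ) (s : ℕ) (hs1 : 1 ≤ s) (hsn : s ≤ n)
    (T : Finset (Fin n)) (hT : T.card = s) :
    ∀ d, s + 1 - pdual n l lam s ≤ d → substShift n (esymmOn n T d) ∈ KTanisaki n l lam := by
  intro d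
  induction d using Nat.strong_induction_on with
  | _ d ih =>
    intro hd
    set q := pdual n l lam s with hq
    by_cases hq0 : q = 0
    · rw [esymmOn_eq_zero (show T.card < d by omega), map_zero]
      exact zero_mem _
    · have hq1 : 1 ≤ q := by omega
      have hdq : T.card + 1 ≤ d + q := by omega
      have hA := A_identity T q d hq1 hdq
      rw [Finset.sum_range_succ] at hA
      have hlast : MvPolynomial.C ((-1 : ℤ) ^ (d - d) * ((d + q - (T.card + 1)).choose (d - d) : ℤ))
          * substShift n (esymmOn n T d) = substShift n (esymmOn n T d) := by
        rw [Nat.sub_self]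
        simp
      rw [hlast] at hA
      have hsub := eq_sub_of_add_eq' hA.symm
      rw [hsub]
      refine sub_mem ?_ (Ideal.sum_mem _ fun m hm => ?_)
      · exact Ideal.subset_span ⟨s, hs1, hsn, T, hT, d, hd, rfl⟩
      · rw [Finset.mem_range] at hm
        by_cases hm0 : s + 1 - q ≤ m
        · exact Ideal.mul_mem_left _ _ (ih m hm hm0)
        · have hc0 : (d + q - (T.card + 1)).choose (d - m) = 0 :=
            Nat.choose_eq_zero_of_lt (by omega)
          rw [hc0]
          simp

lemma map_Tan_le {n l : ℕ} (lam : ℕ → ℕ) :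
    Ideal.map (substShift n) (Tanisaki n l lam) ≤ KTanisaki n l lam := by
  rw [Ideal.map_le_iff_le_comap, Tanisaki, Ideal.span_le]
  rintro p ⟨s, hs1, hsn, T, hT, d, hd, rfl⟩
  exact substShift_esymm_mem lam s hs1 hsn T hT d hd

theorem homogeneous_quotient_addEquiv_filtered_quotient
    (n l : ℕ) (lam : ℕ → ℕ) (hn : 1 ≤ n)
    (hmono : ∀ i j : ℕ, i ≤ j → lam j ≤ lam i)
    (hpos : ∀ i < l, 0 < lam i) (hzero : ∀ i, l ≤ i → lam i = 0)
    (hsum : ∑ i ∈ Finset.range l, lam i = n)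
    (k : ℕ) (hk : 1 ≤ k) :
    ∃ φ : (SkGrp n k ⧸ (((Tanisaki n l lam).toAddSubgroup ⊓ SkGrp n k).addSubgroupOf (SkGrp n k)))
        ≃+ (RkGrp n k ⧸
            ((((KTanisaki n l lam).toAddSubgroup ⊓ RkGrp n k) ⊔ RkGrp n (k - 1)).addSubgroupOf
              (RkGrp n k))),
      ∀ (p : MvPolynomial (Fin n) ℤ) (hp : p ∈ SkGrp n k) (hq : substShift n p ∈ RkGrp n k),
        φ (QuotientAddGroup.mk ⟨p, hp⟩) = QuotientAddGroup.mk ⟨substShift n p, hq⟩ := by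
  classical
  have hSk : ∀ p : MvPolynomial (Fin n) ℤ, p ∈ SkGrp n k → p.IsHomogeneous k := by
    intro p hp
    rwa [SkGrp, Submodule.mem_toAddSubgroup, mem_homogeneousSubmodule] at hp
  have hSk' : ∀ p : MvPolynomial (Fin n) ℤ, p.IsHomogeneous k → p ∈ SkGrp n k := by
    intro p hp
    rwa [SkGrp, Submodule.mem_toAddSubgroup, mem_homogeneousSubmodule]
  have hsubRk : ∀ p : MvPolynomial (Fin n) ℤ, p ∈ SkGrp n k → substShift n p ∈ RkGrp n k := by
    intro p hp
    refine ⟨le_trans (totalDegree_substShift_le p) (hSk p hp).totalDegree_le, ?_⟩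
    rw [eval_one_substShift, constantCoeff_of_homogeneous hk (hSk p hp)]
  let toRk : SkGrp n k →+ RkGrp n k :=
    { toFun := fun x => ⟨substShift n (x : MvPolynomial (Fin n) ℤ), hsubRk _ x.2⟩
      map_zero' := by
        apply Subtype.ext
        simp
      map_add' := by
        intro a b
        apply Subtype.ext
        simp }
  let H2 : AddSubgroup (RkGrp n k) :=
    ((((KTanisaki n l lam).toAddSubgroup ⊓ RkGrp n k) ⊔ RkGrp n (k - 1)).addSubgroupOf (RkGrp n k))
  let H1 : AddSubgroup (SkGrp n k) :=
    (((Tanisaki n l lam).toAddSubgroup ⊓ SkGrp n k).addSubgroupOf (SkGrp n k))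
  let Φ : SkGrp n k →+ (RkGrp n k ⧸ H2) := (QuotientAddGroup.mk' H2).comp toRk
  have hker : H1 ≤ Φ.ker := by
    intro x hx
    rw [AddSubgroup.mem_addSubgroupOf, AddSubgroup.mem_inf] at hx
    obtain ⟨hxT, _⟩ := hx
    rw [AddMonoidHom.mem_ker]
    show QuotientAddGroup.mk' H2 (toRk x) = 0
    refine (QuotientAddGroup.eq_zero_iff _).mpr ?_
    rw [AddSubgroup.mem_addSubgroupOf]
    refine AddSubgroup.mem_sup.mpr ⟨substShift n (x : MvPolynomial (Fin n) ℤ), ?_, 0,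
      zero_mem _, add_zero _⟩
    refine AddSubgroup.mem_inf.mpr ⟨?_, hsubRk _ x.2⟩
    rw [Submodule.mem_toAddSubgroup]
    exact map_Tan_le lam
      (Ideal.mem_map_of_mem _ ((Submodule.mem_toAddSubgroup _).mp hxT))
  let Ψ := QuotientAddGroup.lift H1 Φ hker
  have hgenhom : ∀ g ∈ {p : MvPolynomial (Fin n) ℤ |
      ∃ s : ℕ, 1 ≤ s ∧ s ≤ n ∧ ∃ T : Finset (Fin n), T.card = s ∧
        ∃ d : ℕ, s + 1 - pdual n l lam s ≤ d ∧ p = esymmOn n T d},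
      ∃ d : ℕ, g.IsHomogeneous d := by
    rintro g ⟨s, _, _, T, _, d, _, rfl⟩
    exact ⟨d, esymmOn_isHomogeneous T d⟩
  have hinj : Function.Injective Ψ := by
    rw [injective_iff_map_eq_zero]
    intro qx hqx
    obtain ⟨x, rfl⟩ := QuotientAddGroup.mk'_surjective H1 qx
    have hqx' : Φ x = 0 := hqx
    have hxH2 : toRk x ∈ H2 := (QuotientAddGroup.eq_zero_iff _).mp hqx'
    rw [AddSubgroup.mem_addSubgroupOf] at hxH2
    obtain ⟨f, hf, g, hg, hfg⟩ := AddSubgroup.mem_sup.mp hxH2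
    obtain ⟨hfKT, hfRk⟩ := AddSubgroup.mem_inf.mp hf
    set p : MvPolynomial (Fin n) ℤ := (x : MvPolynomial (Fin n) ℤ) with hpdef
    have hfmap : unshift n f ∈ Tanisaki n l lam := by
      have h1 : f ∈ Ideal.map (substShift n) (Tanisaki n l lam) :=
        KT_le_map lam ((Submodule.mem_toAddSubgroup _).mp hfKT)
      have h2 := Ideal.mem_map_of_mem (unshift n) h1
      rw [Ideal.map_map] at h2
      have hcomp : (unshift n).comp (substShift n) = RingHom.id _ :=
        RingHom.ext (unshift_substShift n)
      rwa [hcomp, Ideal.map_id] at h2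
    have hpdec : p = unshift n f + unshift n g := by
      have h3 := congrArg (unshift n) hfg
      rw [map_add] at h3
      have : unshift n (((toRk x : RkGrp n k) : MvPolynomial (Fin n) ℤ)) = p := by
        show unshift n (substShift n p) = p
        exact unshift_substShift n p
      rw [this] at h3
      exact h3.symm
    have hphom : p.IsHomogeneous k := hSk p x.2
    have hpk : homogeneousComponent k p = p := by
      rw [homogeneousComponent_of_mem ((mem_homogeneousSubmodule k p).mpr hphom), if_pos rfl]
    have hgz : homogeneousComponent k (unshift n g) = 0 := by
      refine homogeneousComponent_eq_zero k _ ?_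
      have hg1 : g.totalDegree ≤ k - 1 := hg.1
      have := totalDegree_unshift_le g
      omega
    have hpT : p ∈ Tanisaki n l lam := by
      have : p = homogeneousComponent k (unshift n f) := by
        rw [← hpk]
        conv_lhs => rw [hpdec]
        rw [map_add, hgz, add_zero]
      rw [this, Tanisaki]
      exact homogeneousComponent_mem_span hgenhom
        (by rw [← Tanisaki]; exact hfmap) k
    refine (QuotientAddGroup.eq_zero_iff _).mpr ?_
    rw [AddSubgroup.mem_addSubgroupOf, AddSubgroup.mem_inf]
    exact ⟨(Submodule.mem_toAddSubgroup _).mpr hpT, x.2⟩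
  have hsurj : Function.Surjective Ψ := by
    intro qy
    obtain ⟨y, rfl⟩ := QuotientAddGroup.mk'_surjective H2 qy
    obtain ⟨f, hfRk⟩ := y
    have hp : homogeneousComponent k f ∈ SkGrp n k :=
      hSk' _ (homogeneousComponent_isHomogeneous k f)
    refine ⟨QuotientAddGroup.mk' H1 (⟨homogeneousComponent k f, hp⟩ : SkGrp n k), ?_⟩
    show QuotientAddGroup.mk' H2 (toRk ⟨homogeneousComponent k f, hp⟩)
      = QuotientAddGroup.mk' H2 ⟨f, hfRk⟩
    rw [QuotientAddGroup.mk'_eq_mk']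
    refine ⟨(⟨f, hfRk⟩ : RkGrp n k) - toRk ⟨homogeneousComponent k f, hp⟩, ?_, by abel⟩
    rw [AddSubgroup.mem_addSubgroupOf]
    have hcoe : (((⟨f, hfRk⟩ : RkGrp n k) - toRk ⟨homogeneousComponent k f, hp⟩ : RkGrp n k)
        : MvPolynomial (Fin n) ℤ) = f - substShift n (homogeneousComponent k f) := rfl
    rw [hcoe]
    refine AddSubgroup.mem_sup.mpr ⟨0, zero_mem _, _, ?_, zero_add _⟩
    have hd1 : (substShift n (homogeneousComponent k f) - homogeneousComponent k f).totalDegree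
        ≤ k - 1 := by
      refine le_trans (totalDegree_substShift_sub_self _) ?_
      have := (homogeneousComponent_isHomogeneous k f).totalDegree_le
      omega
    have hd2 : (f - homogeneousComponent k f).totalDegree ≤ k - 1 :=
      totalDegree_sub_homogeneousComponent f k hfRk.1
    have heq : f - substShift n (homogeneousComponent k f)
        = (f - homogeneousComponent k f)
          - (substShift n (homogeneousComponent k f) - homogeneousComponent k f) := by
      ring
    constructor
    · rw [heq, sub_eq_add_neg]
      refine le_trans (totalDegree_add _ _) (max_le hd2 ?_)
      rw [totalDegree_neg]
      exact hd1
    · rw [map_sub, hfRk.2, eval_one_substShift,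
        constantCoeff_of_homogeneous hk (homogeneousComponent_isHomogeneous k f), sub_zero]
  refine ⟨AddEquiv.ofBijective Ψ ⟨hinj, hsurj⟩, ?_⟩
  intro p hp hq
  rfl
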